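/- Let Γ be a countable group acting on a countable set I such that every Γ-orbit in I is infinite, and let (X₀,μ₀) be a standard Borel probability space. Then the generalized Bernoulli action of Γ on the product probability space (X₀^I, μ₀^{⊗I}), given by (g·x)_i = x_{g⁻¹·i}, is measure preserving and ergodic: every measurable set A ⊆ X₀^I with μ(g·A Δ A) = 0 for all g ∈ Γ has μ(A) ∈ {0,1}. -/

import Mathlib

open MeasureTheory Set
open scoped ENNReal Pointwise symmDiff

/-- `μ` is the product over `ι` of copies of `μ₀`: every finite-dimensional cylinder has
measure equal to the corresponding finite product. -/
def IsProductMeasure {ι X₀ : Type*} [MeasurableSpace X₀] (μ₀ : Measure X₀)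
    (μ : Measure (ι → X₀)) : Prop :=
  ∀ (s : Finset ι) (A : ι → Set X₀), (∀ i ∈ s, MeasurableSet (A i)) →
    μ {x | ∀ i ∈ s, x i ∈ A i} = ∏ i ∈ s, μ₀ (A i)

section Aux

variable {I : Type*} {X₀ : Type*} [MeasurableSpace X₀] {μ₀ : Measure X₀}
  [IsProbabilityMeasure μ₀] {μ ν : Measure (I → X₀)}

lemma measurableSet_box (s : Finset I) {A : I → Set X₀} (hA : ∀ i ∈ s, MeasurableSet (A i)) :
    MeasurableSet {x : I → X₀ | ∀ i ∈ s, x i ∈ A i} := by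
  have h : {x : I → X₀ | ∀ i ∈ s, x i ∈ A i} = ⋂ i ∈ s, (fun x : I → X₀ => x i) ⁻¹' A i := by
    ext x; simp
  rw [h]
  exact MeasurableSet.biInter s.countable_toSet fun i hi => (measurable_pi_apply i) (hA i hi)

lemma IsProductMeasure.isProbabilityMeasure (hμ : IsProductMeasure μ₀ μ) :
    IsProbabilityMeasure μ := by
  constructor
  have := hμ ∅ (fun _ => Set.univ) (by simp)
  simpa using this

lemma IsProductMeasure.unique (hμ : IsProductMeasure μ₀ μ) (hν : IsProductMeasure μ₀ ν) :
    μ = ν := by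
  have h1 := hμ.isProbabilityMeasure
  have h2 := hν.isProbabilityMeasure
  refine ext_of_generate_finite _ generateFrom_squareCylinders.symm
    (isPiSystem_squareCylinders (fun _ => MeasurableSpace.isPiSystem_measurableSet)
      (fun _ => MeasurableSet.univ)) ?_ (by simp)
  rintro S ⟨s, A, hA, rfl⟩
  simp only [Set.mem_univ_pi, Set.mem_setOf_eq] at hA
  have h : (s : Set I).pi A = {x : I → X₀ | ∀ i ∈ s, x i ∈ A i} := rfl
  rw [h, hμ s A fun i _ => hA i, hν s A fun i _ => hA i]

lemma IsProductMeasure.measurePreserving_perm (hμ : IsProductMeasure μ₀ μ) (e : I ≃ I) :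
    MeasurePreserving (fun (x : I → X₀) (i : I) => x (e i)) μ μ := by
  classical
  have hmeas : Measurable (fun (x : I → X₀) (i : I) => x (e i)) :=
    measurable_pi_lambda _ fun i => measurable_pi_apply _
  refine ⟨hmeas, IsProductMeasure.unique ?_ hμ⟩
  intro s A hA
  rw [Measure.map_apply hmeas (measurableSet_box s hA)]
  have hpre : (fun (x : I → X₀) (i : I) => x (e i)) ⁻¹' {x | ∀ i ∈ s, x i ∈ A i}
      = {x : I → X₀ | ∀ j ∈ s.image e, x j ∈ A (e.symm j)} := by
    ext x
    simp only [Set.mem_preimage, Set.mem_setOf_eq, Finset.mem_image]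
    constructor
    · rintro h j ⟨i, hi, rfl⟩
      simpa using h i hi
    · intro h i hi
      have := h (e i) ⟨i, hi, rfl⟩
      simpa using this
  rw [hpre, hμ _ _ ?_, Finset.prod_image (fun a _ b _ h => e.injective h)]
  · exact Finset.prod_congr rfl fun i _ => by simp
  · rintro j hj
    rw [Finset.mem_image] at hj
    obtain ⟨i, hi, rfl⟩ := hj
    simpa using hA i hi

lemma IsProductMeasure.box_inter (hμ : IsProductMeasure μ₀ μ) {s t : Finset I}
    (hst : Disjoint s t) {A B : I → Set X₀} (hA : ∀ i ∈ s, MeasurableSet (A i))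
    (hB : ∀ i ∈ t, MeasurableSet (B i)) :
    μ ({x | ∀ i ∈ s, x i ∈ A i} ∩ {x | ∀ i ∈ t, x i ∈ B i})
      = μ {x | ∀ i ∈ s, x i ∈ A i} * μ {x | ∀ i ∈ t, x i ∈ B i} := by
  classical
  set C : I → Set X₀ := fun i =>
    (if i ∈ s then A i else Set.univ) ∩ (if i ∈ t then B i else Set.univ) with hC
  have hinter : {x : I → X₀ | ∀ i ∈ s, x i ∈ A i} ∩ {x | ∀ i ∈ t, x i ∈ B i}
      = {x | ∀ i ∈ s ∪ t, x i ∈ C i} := by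
    ext x
    simp only [Set.mem_inter_iff, Set.mem_setOf_eq, Finset.mem_union, hC]
    constructor
    · rintro ⟨h1, h2⟩ i hi
      constructor
      · split_ifs with h
        exacts [h1 i h, Set.mem_univ _]
      · split_ifs with h
        exacts [h2 i h, Set.mem_univ _]
    · intro h
      refine ⟨fun i hi => ?_, fun i hi => ?_⟩
      · have := (h i (Or.inl hi)).1; rwa [if_pos hi] at this
      · have := (h i (Or.inr hi)).2; rwa [if_pos hi] at this
  have hCmeas : ∀ i ∈ s ∪ t, MeasurableSet (C i) := by
    intro i _
    refine MeasurableSet.inter ?_ ?_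
    · split_ifs with h
      exacts [hA i h, MeasurableSet.univ]
    · split_ifs with h
      exacts [hB i h, MeasurableSet.univ]
  rw [hinter, hμ _ _ hCmeas, Finset.prod_union hst, hμ s A hA, hμ t B hB]
  congr 1
  · refine Finset.prod_congr rfl fun i hi => ?_
    have hit : i ∉ t := Finset.disjoint_left.mp hst hi
    simp [hC, if_pos hi, if_neg hit]
  · refine Finset.prod_congr rfl fun i hi => ?_
    have his : i ∉ s := Finset.disjoint_right.mp hst hi
    simp [hC, if_pos hi, if_neg his]

lemma cylinder_univ_pi (t : Finset I) (B' : ∀ i : t, Set X₀) [DecidablePred (· ∈ t)] :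
    cylinder t (Set.univ.pi B')
      = {x : I → X₀ | ∀ i ∈ t, x i ∈ (if h : i ∈ t then B' ⟨i, h⟩ else Set.univ)} := by
  ext x
  simp only [mem_cylinder, Set.mem_univ_pi, Set.mem_setOf_eq, Finset.restrict]
  constructor
  · intro h i hi
    rw [dif_pos hi]
    exact h ⟨i, hi⟩
  · intro h i
    have := h i i.2
    rwa [dif_pos i.2] at this

lemma IsProductMeasure.aux_ind (hμ : IsProductMeasure μ₀ μ) {P : Set (I → X₀)}
    (hP : MeasurableSet P) (t : Finset I)
    (base : ∀ B : I → Set X₀, (∀ i ∈ t, MeasurableSet (B i)) →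
      μ (P ∩ {x | ∀ i ∈ t, x i ∈ B i}) = μ P * μ {x | ∀ i ∈ t, x i ∈ B i}) :
    ∀ {T : Set (∀ i : t, X₀)}, MeasurableSet T →
      μ (P ∩ cylinder t T) = μ P * μ (cylinder t T) := by
  classical
  have hprob := hμ.isProbabilityMeasure
  intro T hT
  refine MeasurableSpace.induction_on_inter
    (C := fun T _ => μ (P ∩ cylinder t T) = μ P * μ (cylinder t T))
    (generateFrom_pi (α := fun _ : t => X₀)).symm (isPiSystem_pi (α := fun _ : t => X₀)) ?_ ?_ ?_ ?_ _ hT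
  · simp
  · rintro _ ⟨B', hB', rfl⟩
    simp only [Set.mem_univ_pi, Set.mem_setOf_eq] at hB'
    rw [cylinder_univ_pi]
    refine base _ fun i hi => ?_
    rw [dif_pos hi]
    exact hB' _
  · intro T hT ih
    have hcyl : MeasurableSet (cylinder t T : Set (I → X₀)) := MeasurableSet.cylinder (α := fun _ : I => X₀) t hT
    have hcompl : (cylinder t Tᶜ : Set (I → X₀)) = (cylinder t T)ᶜ := (compl_cylinder (α := fun _ : I => X₀) t T).symm
    have h1 : μ (P ∩ cylinder t T) + μ (P ∩ (cylinder t T)ᶜ) = μ P := by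
      have := measure_inter_add_diff (μ := μ) P hcyl
      rwa [Set.diff_eq] at this
    have h2 : μ P * μ (cylinder t T) + μ P * μ ((cylinder t T)ᶜ) = μ P := by
      rw [← mul_add, measure_add_measure_compl hcyl, measure_univ, mul_one]
    rw [ih] at h1
    rw [hcompl]
    have hfin : μ P * μ (cylinder t T) ≠ ∞ :=
      ENNReal.mul_ne_top (measure_ne_top μ _) (measure_ne_top μ _)
    have := h1.trans h2.symm
    exact (ENNReal.add_right_inj hfin).mp this
  · intro f hdisj hmeas ih
    have hcylU : (cylinder t (⋃ n, f n) : Set (I → X₀)) = ⋃ n, cylinder t (f n) := by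
      simp [cylinder, Set.preimage_iUnion]
    have hd : Pairwise (Function.onFun Disjoint fun n => (cylinder t (f n) : Set (I → X₀))) :=
      fun m n hmn => Disjoint.preimage _ (hdisj hmn)
    have hd' : Pairwise (Function.onFun Disjoint fun n => P ∩ cylinder t (f n)) :=
      fun m n hmn => ((hd hmn).mono inf_le_right inf_le_right)
    have hm : ∀ n, MeasurableSet (cylinder t (f n) : Set (I → X₀)) := fun n => MeasurableSet.cylinder (α := fun _ : I => X₀) t (hmeas n)
    rw [hcylU, Set.inter_iUnion, measure_iUnion hd' (fun n => hP.inter (hm n)),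
      measure_iUnion hd hm]
    calc ∑' n, μ (P ∩ cylinder t (f n)) = ∑' n, μ P * μ (cylinder t (f n)) := by
          exact tsum_congr fun n => ih n
      _ = μ P * ∑' n, μ (cylinder t (f n)) := ENNReal.tsum_mul_left

lemma IsProductMeasure.indep (hμ : IsProductMeasure μ₀ μ) {s t : Finset I}
    (hst : Disjoint s t) {S : Set (∀ i : s, X₀)} {T : Set (∀ i : t, X₀)}
    (hS : MeasurableSet S) (hT : MeasurableSet T) :
    μ (cylinder s S ∩ cylinder t T) = μ (cylinder s S) * μ (cylinder t T) := by
  classical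
  have step1 : ∀ (A : I → Set X₀), (∀ i ∈ s, MeasurableSet (A i)) →
      μ ({x | ∀ i ∈ s, x i ∈ A i} ∩ cylinder t T)
        = μ {x | ∀ i ∈ s, x i ∈ A i} * μ (cylinder t T) := by
    intro A hA
    exact hμ.aux_ind (measurableSet_box s hA) t (fun B hB => hμ.box_inter hst hA hB) hT
  have step2 : μ (cylinder t T ∩ cylinder s S) = μ (cylinder t T) * μ (cylinder s S) := by
    refine hμ.aux_ind (MeasurableSet.cylinder (α := fun _ : I => X₀) t hT) s (fun B hB => ?_) hS
    rw [Set.inter_comm, step1 B hB, mul_comm]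
  rw [Set.inter_comm, step2, mul_comm]

end Aux

lemma exists_smul_disjoint' {Γ I : Type*} [Group Γ] [MulAction Γ I]
    (horb : ∀ i : I, (MulAction.orbit Γ i).Infinite) (F : Finset I) :
    ∃ g : Γ, ∀ i ∈ F, g • i ∉ F := by
  classical
  by_contra hcon
  push_neg at hcon
  set H : I × I → Subgroup Γ := fun p => MulAction.stabilizer Γ p.1 with hH
  set g : I × I → Γ := fun p => if h : ∃ δ : Γ, δ • p.1 = p.2 then h.choose else 1 with hg
  have hcovers : ⋃ p ∈ F ×ˢ F, (g p) • (H p : Set Γ) = Set.univ := by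
    ext γ
    simp only [Set.mem_iUnion, Set.mem_univ, iff_true, exists_prop]
    obtain ⟨i, hiF, hγi⟩ := hcon γ
    refine ⟨(i, γ • i), Finset.mem_product.mpr ⟨hiF, hγi⟩, ?_⟩
    have hex : ∃ δ : Γ, δ • i = γ • i := ⟨γ, rfl⟩
    have hc : g (i, γ • i) • i = γ • i := by
      rw [hg]; dsimp only; rw [dif_pos hex]; exact hex.choose_spec
    rw [Set.mem_smul_set_iff_inv_smul_mem]
    show (g (i, γ • i))⁻¹ * γ ∈ MulAction.stabilizer Γ i
    rw [MulAction.mem_stabilizer_iff, mul_smul, inv_smul_eq_iff]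
    exact hc.symm
  obtain ⟨p, _, hfin⟩ := Subgroup.exists_finiteIndex_of_leftCoset_cover hcovers
  haveI := hfin
  have hfin' : Finite (MulAction.orbit Γ p.1) :=
    Finite.of_equiv _ (MulAction.orbitEquivQuotientStabilizer Γ p.1).symm
  haveI := (horb p.1).to_subtype
  exact not_finite (MulAction.orbit Γ p.1)

lemma measure_le_measure_add_symmDiff {α : Type*} [MeasurableSpace α] (μ : Measure α)
    (X Y : Set α) : μ X ≤ μ Y + μ (X ∆ Y) := by
  calc μ X ≤ μ (Y ∪ X ∆ Y) := by
        refine measure_mono fun x hx => ?_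
        by_cases h : x ∈ Y
        · exact Or.inl h
        · exact Or.inr (Set.mem_symmDiff.mpr (Or.inl ⟨hx, h⟩))
    _ ≤ μ Y + μ (X ∆ Y) := measure_union_le _ _

/-- if a countable group `Γ` acts on a countable set `I` with all orbits
infinite, then the generalized Bernoulli action `(g · x)_i = x_{g⁻¹ · i}` on
`(X₀^I, μ₀^{⊗I})` is measure preserving and ergodic. -/
theorem stmt6 (Γ : Type*) [Group Γ] [Countable Γ]
    (I : Type*) [Countable I] [MulAction Γ I]
    (horb : ∀ i : I, (MulAction.orbit Γ i).Infinite)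
    (X₀ : Type*) [MeasurableSpace X₀] [StandardBorelSpace X₀]
    (μ₀ : Measure X₀) [IsProbabilityMeasure μ₀]
    (μ : Measure (I → X₀)) (hμ : IsProductMeasure μ₀ μ) :
    (∀ g : Γ, MeasurePreserving (fun (x : I → X₀) (i : I) => x (g⁻¹ • i)) μ μ) ∧
    (∀ A : Set (I → X₀), MeasurableSet A →
      (∀ g : Γ, μ (symmDiff ((fun (x : I → X₀) (i : I) => x (g⁻¹ • i)) '' A) A) = 0) →
      μ A = 0 ∨ μ A = 1) := by
  classical
  haveI hprob : IsProbabilityMeasure μ := hμ.isProbabilityMeasure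
  have hmp : ∀ g : Γ, MeasurePreserving (fun (x : I → X₀) (i : I) => x (g⁻¹ • i)) μ μ :=
    fun g => hμ.measurePreserving_perm (MulAction.toPerm (g⁻¹ : Γ))
  refine ⟨hmp, ?_⟩
  intro A hAmeas hA
  -- invariance under preimages
  have hApre : ∀ γ : Γ, μ (((fun (x : I → X₀) (i : I) => x (γ • i)) ⁻¹' A) ∆ A) = 0 := by
    intro γ
    have h1 := hA γ
    have hinv1 : Function.LeftInverse (fun (x : I → X₀) (i : I) => x (γ • i))
        (fun (x : I → X₀) (i : I) => x (γ⁻¹ • i)) := fun x => funext fun i => by simp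
    have hinv2 : Function.RightInverse (fun (x : I → X₀) (i : I) => x (γ • i))
        (fun (x : I → X₀) (i : I) => x (γ⁻¹ • i)) := fun x => funext fun i => by simp
    have himg : (fun (x : I → X₀) (i : I) => x (γ⁻¹ • i)) '' A
        = (fun (x : I → X₀) (i : I) => x (γ • i)) ⁻¹' A :=
      congrFun (Set.image_eq_preimage_of_inverse hinv1 hinv2) A
    rwa [himg] at h1
  have halg : IsSetAlgebra (measurableCylinders fun _ : I => X₀) :=
    ⟨empty_mem_measurableCylinders _, fun _ h => compl_mem_measurableCylinders h,
     fun _ _ h h' => union_mem_measurableCylinders h h'⟩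
  have hdense := Measure.MeasureDense.of_generateFrom_isSetAlgebra_finite (μ := μ) halg
    generateFrom_measurableCylinders.symm
  have key : ∀ ε : ℝ, 0 < ε →
      μ A ≤ μ A * μ A + ENNReal.ofReal ε * 5 ∧ μ A * μ A ≤ μ A + ENNReal.ofReal ε * 5 := by
    intro ε hε
    obtain ⟨B, hBmem, hABlt⟩ := hdense.approx A hAmeas (measure_ne_top μ A) ε hε
    obtain ⟨s, S, hS, rfl⟩ := (mem_measurableCylinders B).mp hBmem
    obtain ⟨γ, hγ⟩ := exists_smul_disjoint' horb s
    set T : (I → X₀) → (I → X₀) := fun x i => x (γ • i) with hT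
    have hTmp : MeasurePreserving T μ μ := hμ.measurePreserving_perm (MulAction.toPerm γ)
    have hTA : μ ((T ⁻¹' A) ∆ A) = 0 := hApre γ
    set s' : Finset I := s.image (γ • ·) with hs'
    set φ : (∀ j : s', X₀) → (∀ i : s, X₀) :=
      fun y i => y ⟨γ • (i : I), Finset.mem_image_of_mem _ i.2⟩ with hφ
    have hφm : Measurable φ := measurable_pi_lambda _ fun i => measurable_pi_apply _
    have hCeq : T ⁻¹' cylinder s S = cylinder s' (φ ⁻¹' S) := rfl
    have hdisj : Disjoint s s' := by
      refine Finset.disjoint_left.mpr fun i hi hmem => ?_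
      rw [hs', Finset.mem_image] at hmem
      obtain ⟨j, hj, rfl⟩ := hmem
      exact hγ j hj hi
    have hindep : μ (cylinder s S ∩ T ⁻¹' cylinder s S)
        = μ (cylinder s S) * μ (T ⁻¹' cylinder s S) := by
      rw [hCeq]
      exact hμ.indep hdisj hS (hφm hS)
    have hBmeas : MeasurableSet (cylinder s S : Set (I → X₀)) := MeasurableSet.cylinder (α := fun _ : I => X₀) s hS
    have hTB : μ (T ⁻¹' cylinder s S) = μ (cylinder s S) :=
      hTmp.measure_preimage hBmeas.nullMeasurableSet
    set a := μ A with ha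
    set b := μ (cylinder s S) with hb
    set e := μ (A ∆ cylinder s S) with he
    have heε : e ≤ ENNReal.ofReal ε := le_of_lt hABlt
    have ha1 : a ≤ 1 := prob_le_one
    have hb1 : b ≤ 1 := prob_le_one
    have he1 : e ≤ 1 := prob_le_one
    have hab : a ≤ b + e := measure_le_measure_add_symmDiff μ _ _
    have hba : b ≤ a + e := by
      have := measure_le_measure_add_symmDiff μ (cylinder s S) A
      rwa [symmDiff_comm] at this
    have hAC : μ (A ∆ (T ⁻¹' cylinder s S)) ≤ e := by
      calc μ (A ∆ (T ⁻¹' cylinder s S))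
          ≤ μ ((A ∆ (T ⁻¹' A)) ∪ ((T ⁻¹' A) ∆ (T ⁻¹' cylinder s S))) :=
            measure_mono (symmDiff_triangle _ _ _)
        _ ≤ μ (A ∆ (T ⁻¹' A)) + μ ((T ⁻¹' A) ∆ (T ⁻¹' cylinder s S)) := measure_union_le _ _
        _ = 0 + μ (T ⁻¹' (A ∆ cylinder s S)) := by
            rw [symmDiff_comm A, hTA, Set.preimage_symmDiff]
        _ = e := by
            rw [zero_add, hTmp.measure_preimage (hAmeas.symmDiff hBmeas).nullMeasurableSet]
    have hsub : A ∆ (cylinder s S ∩ T ⁻¹' cylinder s S)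
        ⊆ (A ∆ cylinder s S) ∪ (A ∆ (T ⁻¹' cylinder s S)) := by
      intro x hx
      rw [Set.mem_symmDiff] at hx
      rw [Set.mem_union, Set.mem_symmDiff, Set.mem_symmDiff]
      simp only [Set.mem_inter_iff] at hx
      tauto
    have hABC : μ (A ∆ (cylinder s S ∩ T ⁻¹' cylinder s S)) ≤ e + e := by
      calc μ (A ∆ (cylinder s S ∩ T ⁻¹' cylinder s S))
          ≤ μ ((A ∆ cylinder s S) ∪ (A ∆ (T ⁻¹' cylinder s S))) := measure_mono hsub
        _ ≤ μ (A ∆ cylinder s S) + μ (A ∆ (T ⁻¹' cylinder s S)) := measure_union_le _ _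
        _ ≤ e + e := add_le_add le_rfl hAC
    have hBC : μ (cylinder s S ∩ T ⁻¹' cylinder s S) = b * b := by rw [hindep, hTB]
    have hae : a * e ≤ e := by simpa using mul_le_mul' ha1 (le_refl e)
    have hea : e * a ≤ e := by simpa using mul_le_mul' (le_refl e) ha1
    have hbe : b * e ≤ e := by simpa using mul_le_mul' hb1 (le_refl e)
    have heb : e * b ≤ e := by simpa using mul_le_mul' (le_refl e) hb1
    have hee : e * e ≤ e := by simpa using mul_le_mul' (le_refl e) he1
    -- a ≤ b*b + 2e
    have h1 : a ≤ b * b + (e + e) := by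
      calc a ≤ μ (cylinder s S ∩ T ⁻¹' cylinder s S)
              + μ (A ∆ (cylinder s S ∩ T ⁻¹' cylinder s S)) :=
            measure_le_measure_add_symmDiff μ _ _
        _ ≤ b * b + (e + e) := by rw [hBC]; exact add_le_add le_rfl hABC
    -- b*b ≤ a + 2e
    have h2 : b * b ≤ a + (e + e) := by
      have h3 := measure_le_measure_add_symmDiff μ (cylinder s S ∩ T ⁻¹' cylinder s S) A
      rw [hBC, symmDiff_comm] at h3
      exact h3.trans (add_le_add le_rfl hABC)
    -- b*b ≤ a*a + 3e
    have h4 : b * b ≤ a * a + (e + e + e) := by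
      calc b * b ≤ (a + e) * (a + e) := mul_le_mul' hba hba
        _ = a * a + (a * e + e * a + e * e) := by ring
        _ ≤ a * a + (e + e + e) :=
            add_le_add le_rfl (add_le_add (add_le_add hae hea) hee)
    -- a*a ≤ b*b + 3e
    have h5 : a * a ≤ b * b + (e + e + e) := by
      calc a * a ≤ (b + e) * (b + e) := mul_le_mul' hab hab
        _ = b * b + (b * e + e * b + e * e) := by ring
        _ ≤ b * b + (e + e + e) :=
            add_le_add le_rfl (add_le_add (add_le_add hbe heb) hee)
    have h5e : e + e + e + (e + e) ≤ ENNReal.ofReal ε * 5 := by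
      calc e + e + e + (e + e)
          ≤ ENNReal.ofReal ε + ENNReal.ofReal ε + ENNReal.ofReal ε
            + (ENNReal.ofReal ε + ENNReal.ofReal ε) := by
            exact add_le_add (add_le_add (add_le_add heε heε) heε) (add_le_add heε heε)
        _ = ENNReal.ofReal ε * 5 := by ring
    constructor
    · calc a ≤ b * b + (e + e) := h1
        _ ≤ (a * a + (e + e + e)) + (e + e) := add_le_add h4 le_rfl
        _ = a * a + (e + e + e + (e + e)) := by ring
        _ ≤ a * a + ENNReal.ofReal ε * 5 := add_le_add le_rfl h5e
    · calc a * a ≤ b * b + (e + e + e) := h5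
        _ ≤ (a + (e + e)) + (e + e + e) := add_le_add h2 le_rfl
        _ = a + (e + e + e + (e + e)) := by ring
        _ ≤ a + ENNReal.ofReal ε * 5 := add_le_add le_rfl h5e
  have hofReal : ∀ εn : NNReal, 0 < εn → ENNReal.ofReal ((εn : ℝ) / 5) * 5 = (εn : ENNReal) := by
    intro εn _
    rw [show (5 : ENNReal) = ENNReal.ofReal (5 : ℝ) by norm_num,
      ← ENNReal.ofReal_mul (by positivity), div_mul_cancel₀ _ (by norm_num : (5:ℝ) ≠ 0),
      ENNReal.ofReal_coe_nnreal]
  have hle1 : μ A ≤ μ A * μ A := by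
    refine ENNReal.le_of_forall_pos_le_add fun εn hεn _ => ?_
    have h := (key ((εn : ℝ) / 5) (by positivity)).1
    rwa [hofReal εn hεn] at h
  have hle2 : μ A * μ A ≤ μ A := by
    refine ENNReal.le_of_forall_pos_le_add fun εn hεn _ => ?_
    have h := (key ((εn : ℝ) / 5) (by positivity)).2
    rwa [hofReal εn hεn] at h
  have heq : μ A * μ A = μ A := le_antisymm hle2 hle1
  rcases eq_or_ne (μ A) 0 with h0 | h0
  · exact Or.inl h0
  · right
    have h1 : μ A * μ A = μ A * 1 := by rw [mul_one]; exact heq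
    exact (ENNReal.mul_right_inj h0 (measure_ne_top μ A)).mp h1
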